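/- The rational function r(x) = (864x-1)·(4(864x-1)² + 87)/(12·(3 + 4(864x-1)²)) is a solution of the Riccati equation with parameter λ = 169/144: for every real x with x ≠ 0 and x ≠ 1/432, one has r'(x) + r(x)²/((1-432x)x) - 60 = (169/144)·(1/((1-432x)x)). -/

import Mathlib

/-- The rational function `r(x) = (864x-1)(4(864x-1)^2 + 87)/(12(3 + 4(864x-1)^2))` solves the
Riccati equation `r'(x) + C_x r(x)^2 - 60 = λ C_x` with `C_x = 1/((1-432x)x)` and
`λ = 169/144`, for every real `x ≠ 0`, `x ≠ 1/432`. -/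
theorem riccati_solution_lambda_169_over_144 :
    ∀ x : ℝ, x ≠ 0 → x ≠ 1 / 432 →
      deriv (fun y : ℝ =>
          (864 * y - 1) * (4 * (864 * y - 1) ^ 2 + 87) / (12 * (3 + 4 * (864 * y - 1) ^ 2))) x
        + ((864 * x - 1) * (4 * (864 * x - 1) ^ 2 + 87)
            / (12 * (3 + 4 * (864 * x - 1) ^ 2))) ^ 2 / ((1 - 432 * x) * x) - 60
      = (169 / 144) * (1 / ((1 - 432 * x) * x)) := by
  intro x hx0 hx2
  have hu : HasDerivAt (fun y : ℝ => 864 * y - 1) 864 x := by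
    simpa using ((hasDerivAt_id x).const_mul (864 : ℝ)).sub_const 1
  have hsq : HasDerivAt (fun y : ℝ => 4 * (864 * y - 1) ^ 2)
      (4 * (2 * (864 * x - 1) ^ 1 * 864)) x := (hu.pow 2).const_mul 4
  have hN : HasDerivAt (fun y : ℝ => (864 * y - 1) * (4 * (864 * y - 1) ^ 2 + 87))
      (864 * (4 * (864 * x - 1) ^ 2 + 87)
        + (864 * x - 1) * (4 * (2 * (864 * x - 1) ^ 1 * 864))) x :=
    hu.mul (hsq.add_const 87)
  have hD : HasDerivAt (fun y : ℝ => 12 * (3 + 4 * (864 * y - 1) ^ 2))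
      (12 * (4 * (2 * (864 * x - 1) ^ 1 * 864))) x := (hsq.const_add 3).const_mul 12
  have hD0 : (12 * (3 + 4 * (864 * x - 1) ^ 2) : ℝ) ≠ 0 := by positivity
  have hderiv : deriv (fun y : ℝ =>
      (864 * y - 1) * (4 * (864 * y - 1) ^ 2 + 87) / (12 * (3 + 4 * (864 * y - 1) ^ 2))) x = _ :=
    (hN.div hD hD0).deriv
  rw [hderiv]
  have h1 : (1 - 432 * x : ℝ) ≠ 0 := by
    intro h
    apply hx2
    linarith
  have h1' : (1 - x * 432 : ℝ) ≠ 0 := by contrapose! h1; linarith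
  field_simp
  ring
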